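/- Let U* ∈ R^{d×k} have orthonormal columns with orthogonal complement basis U_⊥*, let U_t ∈ R^{d×k} have orthonormal columns, let Σ ∈ R^{k×k} be any matrix, let N, ξ ∈ R^{d×k}, and suppose Û = U_t(I_k − ηΣ) + ηN + ηξ admits a QR decomposition Û = U_{t+1}P with U_{t+1} orthonormal columns and P invertible upper triangular. Then dist(U_{t+1}, U*) ≤ ‖P⁻¹‖₂ · ( ‖I_k − ηΣ‖₂ · dist(U_t, U*) + η‖N‖₂ + η‖ξ‖₂ ), where dist(A, B) = ‖A_⊥ᵀB‖₂. -/
import Mathlib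


open Matrix

/-- Spectral norm (largest singular value) of a real matrix. -/
noncomputable def specNorm {m n : Type*} [Fintype m] [Fintype n] [DecidableEq n]
    (A : Matrix m n ℝ) : ℝ :=
  ‖LinearMap.toContinuousLinearMap (Matrix.toEuclideanLin A)‖

open scoped Matrix.Norms.L2Operator

lemma specNorm_eq_norm {m n : Type*} [Fintype m] [Fintype n] [DecidableEq n]
    (A : Matrix m n ℝ) : specNorm A = ‖A‖ := by
  rw [Matrix.l2_opNorm_def]; rfl

lemma norm_one_le (n : Type*) [Fintype n] [DecidableEq n] :
    ‖(1 : Matrix n n ℝ)‖ ≤ 1 := by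
  rw [Matrix.l2_opNorm_def]
  have : (Matrix.toEuclideanLin (𝕜 := ℝ) (m := n) (n := n)).trans
      LinearMap.toContinuousLinearMap (1 : Matrix n n ℝ) = ContinuousLinearMap.id ℝ _ := by
    ext x
    simp [Matrix.toEuclideanLin_apply, Matrix.one_mulVec]
  rw [this]
  exact ContinuousLinearMap.norm_id_le

lemma norm_orthonormal_le_one {d r : ℕ} (B : Matrix (Fin d) (Fin r) ℝ)
    (hB : Bᵀ * B = 1) : ‖Bᵀ‖ ≤ 1 := by
  have ht : ‖Bᵀ‖ = ‖B‖ := by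
    rw [← Matrix.conjTranspose_eq_transpose_of_trivial, Matrix.l2_opNorm_conjTranspose]
  have hsq : ‖B‖ * ‖B‖ ≤ 1 := by
    rw [← Matrix.l2_opNorm_conjTranspose_mul_self,
      Matrix.conjTranspose_eq_transpose_of_trivial, hB]
    exact norm_one_le _
  rw [ht]
  nlinarith [norm_nonneg B]

lemma norm_orthonormal_mul_le {d r k : ℕ} (B : Matrix (Fin d) (Fin r) ℝ)
    (hB : Bᵀ * B = 1) (X : Matrix (Fin d) (Fin k) ℝ) : ‖Bᵀ * X‖ ≤ ‖X‖ := by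
  calc ‖Bᵀ * X‖ ≤ ‖Bᵀ‖ * ‖X‖ := Matrix.l2_opNorm_mul _ _
    _ ≤ 1 * ‖X‖ := by
        exact mul_le_mul_of_nonneg_right (norm_orthonormal_le_one B hB) (norm_nonneg X)
    _ = ‖X‖ := one_mul _

/-- One-step contraction for orthonormalized gradient iterations: if
`Û = U_t(I − ηΣ) + ηN + ηξ = U_{t+1} P` is a QR decomposition with `P` invertible upper
triangular and `U_{t+1}` orthonormal columns, then
`dist(U_{t+1}, U*) ≤ ‖P⁻¹‖₂ (‖I − ηΣ‖₂ dist(U_t, U*) + η‖N‖₂ + η‖ξ‖₂)`,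
where `dist(A, B) = ‖A_⊥ᵀ B‖₂`. -/
theorem stmt7 (d k r : ℕ)
    (Ustar : Matrix (Fin d) (Fin k) ℝ) (Uperp : Matrix (Fin d) (Fin r) ℝ)
    (Ut Ut1 N ξ : Matrix (Fin d) (Fin k) ℝ)
    (S P : Matrix (Fin k) (Fin k) ℝ) (η : ℝ) (hη : 0 ≤ η)
    (hUstar : Ustarᵀ * Ustar = 1) (hUperp : Uperpᵀ * Uperp = 1)
    (hcomp : Ustar * Ustarᵀ + Uperp * Uperpᵀ = 1)
    (hUt : Utᵀ * Ut = 1) (hUt1 : Ut1ᵀ * Ut1 = 1)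
    (hPtri : P.BlockTriangular id) (hPunit : IsUnit P)
    (hQR : Ut * (1 - η • S) + η • N + η • ξ = Ut1 * P) :
    specNorm (Uperpᵀ * Ut1)
      ≤ specNorm P⁻¹
        * (specNorm (1 - η • S) * specNorm (Uperpᵀ * Ut)
            + η * specNorm N + η * specNorm ξ) := by
  simp only [specNorm_eq_norm]
  have hdet : IsUnit P.det := (Matrix.isUnit_iff_isUnit_det P).mp hPunit
  have hPP : P * P⁻¹ = 1 := Matrix.mul_nonsing_inv P hdet
  have key : Uperpᵀ * Ut1
      = (Uperpᵀ * Ut * (1 - η • S) + η • (Uperpᵀ * N) + η • (Uperpᵀ * ξ)) * P⁻¹ := by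
    have h1 : Uperpᵀ * Ut1 = Uperpᵀ * (Ut1 * P) * P⁻¹ := by
      rw [show Uperpᵀ * (Ut1 * P) = Uperpᵀ * Ut1 * P from (Matrix.mul_assoc _ _ _).symm,
        Matrix.mul_assoc, hPP, Matrix.mul_one]
    rw [h1, ← hQR]
    rw [Matrix.mul_add, Matrix.mul_add, Matrix.mul_smul, Matrix.mul_smul, Matrix.mul_assoc]
  rw [key]
  have hη' : ∀ X : Matrix (Fin r) (Fin k) ℝ, ‖η • X‖ = η * ‖X‖ := by
    intro X
    rw [norm_smul, Real.norm_of_nonneg hη]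
  calc ‖(Uperpᵀ * Ut * (1 - η • S) + η • (Uperpᵀ * N) + η • (Uperpᵀ * ξ)) * P⁻¹‖
      ≤ ‖Uperpᵀ * Ut * (1 - η • S) + η • (Uperpᵀ * N) + η • (Uperpᵀ * ξ)‖ * ‖P⁻¹‖ :=
        Matrix.l2_opNorm_mul _ _
    _ ≤ (‖Uperpᵀ * Ut * (1 - η • S)‖ + ‖η • (Uperpᵀ * N)‖ + ‖η • (Uperpᵀ * ξ)‖) * ‖P⁻¹‖ := by
        gcongr
        exact norm_add₃_le
    _ ≤ (‖Uperpᵀ * Ut‖ * ‖(1 - η • S)‖ + η * ‖N‖ + η * ‖ξ‖) * ‖P⁻¹‖ := by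
        gcongr ?_ * ‖P⁻¹‖
        have t1 : ‖Uperpᵀ * Ut * (1 - η • S)‖ ≤ ‖Uperpᵀ * Ut‖ * ‖(1 - η • S)‖ :=
          Matrix.l2_opNorm_mul _ _
        have t2 : ‖η • (Uperpᵀ * N)‖ ≤ η * ‖N‖ := by
          rw [hη']
          exact mul_le_mul_of_nonneg_left (norm_orthonormal_mul_le Uperp hUperp N) hη
        have t3 : ‖η • (Uperpᵀ * ξ)‖ ≤ η * ‖ξ‖ := by
          rw [hη']
          exact mul_le_mul_of_nonneg_left (norm_orthonormal_mul_le Uperp hUperp ξ) hη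
        linarith
    _ = ‖P⁻¹‖ * (‖(1 - η • S)‖ * ‖Uperpᵀ * Ut‖ + η * ‖N‖ + η * ‖ξ‖) := by ring
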